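/- arXiv:2604.05441 — 4 statements merged into one kernel-verified Lean document; each statement's English description precedes it below -/
import Mathlib

section
/- Let γ > 0, 0 ≤ μ_a < 1, 1 ≤ μ_b < 2, a(x) = x^{μ_a} on [0,1], b(x) = (1+x)^{μ_b} on [−1,0]. Suppose u ∈ V²_a(0,1) and w ∈ V²_b(−1,0) satisfy (a u')' = 0 a.e. on (0,1), (b w')' = 0 a.e. on (−1,0), u(0) = w(0), lim_{x→0⁺}(a u')(x) = (b w')(0), and γ u(1) + u'(1) = 0. Then u ≡ 0 and w ≡ 0. -/
open MeasureTheory Set Filter Topology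

/-- `u ∈ V¹_α(x₀, ℓ)` (complex-valued): `u ∈ L²(x₀, ℓ)`, `u` is locally absolutely
continuous on `(x₀, ℓ]` with a.e. derivative `u'` (expressed via the fundamental theorem of
calculus on compact subintervals of `(x₀, ℓ]`), and `√α · u' ∈ L²(x₀, ℓ)`. -/
def MemV1C (x₀ ℓ : ℝ) (α : ℝ → ℝ) (u u' : ℝ → ℂ) : Prop :=
  MemLp u 2 (volume.restrict (Ioo x₀ ℓ)) ∧
  (∀ x y : ℝ, x₀ < x → x ≤ y → y ≤ ℓ →
    IntervalIntegrable u' volume x y ∧ u y - u x = ∫ t in x..y, u' t) ∧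
  MemLp (fun x => Real.sqrt (α x) • u' x) 2 (volume.restrict (Ioo x₀ ℓ))

/-- `u ∈ V²_α(x₀, ℓ)` (complex-valued): `u ∈ V¹_α(x₀, ℓ)` and `α·u' ∈ H¹(x₀, ℓ)`, i.e.
`α·u' ∈ L²`, it is absolutely continuous with a.e. derivative `g' = (α u')' ∈ L²`. -/
def MemV2C (x₀ ℓ : ℝ) (α : ℝ → ℝ) (u u' g' : ℝ → ℂ) : Prop :=
  MemV1C x₀ ℓ α u u' ∧
  MemLp (fun x => α x • u' x) 2 (volume.restrict (Ioo x₀ ℓ)) ∧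
  MemLp g' 2 (volume.restrict (Ioo x₀ ℓ)) ∧
  ∀ x y : ℝ, x₀ < x → x ≤ y → y ≤ ℓ →
    IntervalIntegrable g' volume x y ∧ α y • u' y - α x • u' x = ∫ t in x..y, g' t

lemma aux_int_zero (l r x y : ℝ) (f : ℝ → ℂ)
    (hf : f =ᵐ[volume.restrict (Ioo l r)] 0)
    (hx : l < x) (hxy : x ≤ y) (hy : y ≤ r) : ∫ t in x..y, f t = 0 := by
  rw [intervalIntegral.integral_of_le hxy,
    setIntegral_congr_set (Ioo_ae_eq_Ioc (a := x) (b := y)).symm]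
  have h0 : ∀ᵐ t ∂(volume : Measure ℝ), t ∈ Ioo l r → f t = 0 :=
    (ae_restrict_iff' measurableSet_Ioo).mp hf
  apply setIntegral_eq_zero_of_ae_eq_zero
  filter_upwards [h0] with t ht hmem
  exact ht ⟨hx.trans hmem.1, lt_of_lt_of_le hmem.2 hy⟩

lemma aux_not_int (μb : ℝ) (hμb1 : 1 ≤ μb) :
    ¬ IntegrableOn (fun x : ℝ => (1 + x) ^ (-μb)) (Ioo (-1 : ℝ) 0) volume := by
  intro h
  have h3 : IntegrableOn (fun x : ℝ => (x - (-1))⁻¹) (Ioo (-1 : ℝ) 0) volume := by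
    refine h.mono' ?_ ?_
    · exact ((measurable_id.sub_const (-1)).inv).aestronglyMeasurable
    · refine (ae_restrict_iff' measurableSet_Ioo).mpr (ae_of_all _ fun x hx => ?_)
      have hx1 : (0 : ℝ) < 1 + x := by linarith [hx.1]
      have hx2 : 1 + x ≤ 1 := by linarith [hx.2]
      have : (x - (-1))⁻¹ = (1 + x) ^ (-(1:ℝ)) := by
        rw [Real.rpow_neg_one]; ring_nf
      rw [Real.norm_eq_abs, this, abs_of_nonneg (Real.rpow_nonneg hx1.le _)]
      exact Real.rpow_le_rpow_of_exponent_ge hx1 hx2 (by linarith)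
  have h4 : IntervalIntegrable (fun x : ℝ => (x - (-1))⁻¹) volume (-1) 0 :=
    (intervalIntegrable_iff_integrableOn_Ioo_of_le (by norm_num)).mpr h3
  rw [intervalIntegrable_sub_inv_iff] at h4
  rcases h4 with h | h
  · norm_num at h
  · exact h (by rw [uIcc_of_le (by norm_num)]; exact ⟨le_rfl, by norm_num⟩)

/-- Kernel of the operator (strongly degenerate left string, `1 ≤ μ_b < 2`):
if `u ∈ V²_a(0,1)`, `w ∈ V²_b(-1,0)` satisfy `(a u')' = 0` and `(b w')' = 0` a.e.,
`u(0) = w(0)`, `lim_{x→0⁺}(a u')(x) = (b w')(0)` and `γ u(1) + u'(1) = 0`,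
then `u ≡ 0` and `w ≡ 0`. -/
theorem kernel_trivial_strong (γ μa μb : ℝ) (hγ : 0 < γ)
    (hμa0 : 0 ≤ μa) (hμa1 : μa < 1) (hμb1 : 1 ≤ μb) (hμb2 : μb < 2)
    (u u' gu w w' gw : ℝ → ℂ)
    (hu : MemV2C 0 1 (fun x => x ^ μa) u u' gu)
    (hw : MemV2C (-1) 0 (fun x => (1 + x) ^ μb) w w' gw)
    (hgu : gu =ᵐ[volume.restrict (Ioo (0 : ℝ) 1)] 0)
    (hgw : gw =ᵐ[volume.restrict (Ioo (-1 : ℝ) 0)] 0)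
    (huw : Tendsto u (𝓝[>] (0 : ℝ)) (𝓝 (w 0)))
    (htrans : Tendsto (fun x : ℝ => (x ^ μa : ℝ) • u' x) (𝓝[>] (0 : ℝ))
      (𝓝 ((((1 : ℝ) + 0) ^ μb : ℝ) • w' 0)))
    (hbc : (γ : ℂ) * u 1 + u' 1 = 0) :
    (∀ x ∈ Ioc (0 : ℝ) 1, u x = 0) ∧ (∀ x ∈ Ioc (-1 : ℝ) 0, w x = 0) := by
  -- a u' is constant on (0,1]
  have hA : ∀ x ∈ Ioc (0:ℝ) 1, (x ^ μa : ℝ) • u' x = u' 1 := by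
    intro x hx
    obtain ⟨-, heq⟩ := hu.2.2.2 x 1 hx.1 hx.2 le_rfl
    rw [aux_int_zero 0 1 x 1 gu hgu hx.1 hx.2 le_rfl] at heq
    simp only [Real.one_rpow, one_smul] at heq
    exact (sub_eq_zero.mp heq).symm
  -- b w' is constant on (-1,0]
  have hB : ∀ x ∈ Ioc (-1:ℝ) 0, ((1 + x) ^ μb : ℝ) • w' x = w' 0 := by
    intro x hx
    obtain ⟨-, heq⟩ := hw.2.2.2 x 0 hx.1 hx.2 le_rfl
    rw [aux_int_zero (-1) 0 x 0 gw hgw hx.1 hx.2 le_rfl] at heq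
    simp only [add_zero, Real.one_rpow, one_smul] at heq
    exact (sub_eq_zero.mp heq).symm
  -- the constant on the right equals the constant on the left
  have huniq : u' 1 = (((1 : ℝ) + 0) ^ μb : ℝ) • w' 0 := by
    refine tendsto_nhds_unique ?_ htrans
    apply Tendsto.congr' _ tendsto_const_nhds
    filter_upwards [Ioo_mem_nhdsGT (by norm_num : (0:ℝ) < 1)] with x hx
    exact (hA x ⟨hx.1, hx.2.le⟩).symm
  -- w' 0 = 0, using √b w' ∈ L² and 1 ≤ μb
  have hc0 : w' 0 = 0 := by
    by_contra hc
    have hm := hw.1.2.2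
    have hint := hm.integrable_norm_rpow (by norm_num) (by norm_num)
    have hcn : (0:ℝ) < ‖w' 0‖ ^ 2 := pow_pos (norm_pos_iff.mpr hc) 2
    have hI : IntegrableOn (fun x : ℝ => ‖w' 0‖ ^ 2 * (1 + x) ^ (-μb))
        (Ioo (-1:ℝ) 0) volume := by
      refine hint.congr ?_
      refine (ae_restrict_iff' measurableSet_Ioo).mpr (ae_of_all _ fun x hx => ?_)
      have hs : (0:ℝ) < 1 + x := by linarith [hx.1]
      have hsp : (0:ℝ) < (1 + x) ^ μb := Real.rpow_pos_of_pos hs μb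
      have hn : (1 + x) ^ μb * ‖w' x‖ = ‖w' 0‖ := by
        have := congrArg norm (hB x ⟨hx.1, hx.2.le⟩)
        rwa [norm_smul, Real.norm_eq_abs, abs_of_pos hsp] at this
      have h2 : (2:ENNReal).toReal = (2:ℝ) := by norm_num
      show ‖Real.sqrt ((1 + x) ^ μb) • w' x‖ ^ (2:ENNReal).toReal
          = ‖w' 0‖ ^ 2 * (1 + x) ^ (-μb)
      rw [h2, norm_smul, Real.norm_eq_abs, abs_of_nonneg (Real.sqrt_nonneg _),
        Real.rpow_two, mul_pow, Real.sq_sqrt hsp.le, Real.rpow_neg hs.le, ← hn]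
      field_simp
    have h2 := hI.const_mul ((‖w' 0‖ ^ 2)⁻¹)
    refine aux_not_int μb hμb1 (h2.congr (ae_of_all _ fun x => ?_))
    exact inv_mul_cancel_left₀ hcn.ne' _
  have hu'1 : u' 1 = 0 := by rw [huniq, hc0, smul_zero]
  have hu'z : ∀ x ∈ Ioc (0:ℝ) 1, u' x = 0 := by
    intro x hx
    have h := hA x hx
    rw [hu'1] at h
    have hxp : (0:ℝ) < x ^ μa := Real.rpow_pos_of_pos hx.1 μa
    rcases smul_eq_zero.mp h with h' | h'
    · exact absurd h' hxp.ne'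
    · exact h'
  have hu1 : u 1 = 0 := by
    have hγ' : (γ:ℂ) ≠ 0 := by exact_mod_cast hγ.ne'
    rw [hu'1, add_zero] at hbc
    exact (mul_eq_zero.mp hbc).resolve_left hγ'
  have hAllu : ∀ x ∈ Ioc (0:ℝ) 1, u x = 0 := by
    intro x hx
    obtain ⟨-, heq⟩ := hu.1.2.1 x 1 hx.1 hx.2 le_rfl
    rw [intervalIntegral.integral_of_le hx.2,
      setIntegral_eq_zero_of_forall_eq_zero
        (fun t ht => hu'z t ⟨hx.1.trans ht.1, ht.2⟩)] at heq
    have h := sub_eq_zero.mp heq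
    rw [← h]
    exact hu1
  have hw0 : w 0 = 0 := by
    have l2 : Tendsto u (𝓝[>] (0:ℝ)) (𝓝 0) := by
      apply Tendsto.congr' _ tendsto_const_nhds
      filter_upwards [Ioo_mem_nhdsGT (by norm_num : (0:ℝ) < 1)] with x hx
      exact (hAllu x ⟨hx.1, hx.2.le⟩).symm
    exact tendsto_nhds_unique huw l2
  have hw'z : ∀ x ∈ Ioc (-1:ℝ) 0, w' x = 0 := by
    intro x hx
    have h := hB x hx
    rw [hc0] at h
    have hxp : (0:ℝ) < (1 + x) ^ μb := Real.rpow_pos_of_pos (by linarith [hx.1]) μb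
    rcases smul_eq_zero.mp h with h' | h'
    · exact absurd h' hxp.ne'
    · exact h'
  refine ⟨hAllu, fun x hx => ?_⟩
  obtain ⟨-, heq⟩ := hw.1.2.1 x 0 hx.1 hx.2 le_rfl
  rw [intervalIntegral.integral_of_le hx.2,
    setIntegral_eq_zero_of_forall_eq_zero
      (fun t ht => hw'z t ⟨hx.1.trans ht.1, ht.2⟩)] at heq
  have h := sub_eq_zero.mp heq
  rw [← h]
  exact hw0
end

section
/- Let γ > 0, 0 ≤ μ_a < 1, 0 ≤ μ_b < 1, a(x) = x^{μ_a} on [0,1], b(x) = (1+x)^{μ_b} on [−1,0]. Then for every f ∈ L²(0,1), g ∈ L²(−1,0) and c ∈ ℂ, there exists a unique pair (u, w) with u ∈ V²_a(0,1) and w ∈ V²_b(−1,0) such that (a u')' = f a.e. on (0,1), (b w')' = g a.e. on (−1,0), w(−1) = 0, u(0) = w(0), lim_{x→0⁺}(a u')(x) = (b w')(0), and γ u(1) + u'(1) = c. -/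
open MeasureTheory Set Filter Topology

/-- The boundary value problem for the resolvent at `0` (weakly degenerate left string,
`μ_b < 1`): `u ∈ V²_a(0,1)`, `w ∈ V²_b(-1,0)`, `(a u')' = f` a.e. on `(0,1)`,
`(b w')' = g` a.e. on `(-1,0)`, `w(-1) = 0`, `u(0) = w(0)`,
`lim_{x→0⁺}(a u')(x) = (b w')(0)`, and `γ u(1) + u'(1) = c`. -/
def SolWeak (γ μa μb : ℝ) (f g : ℝ → ℂ) (c : ℂ) (u u' gu w w' gw : ℝ → ℂ) : Prop :=
  MemV2C 0 1 (fun x => x ^ μa) u u' gu ∧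
  MemV2C (-1) 0 (fun x => (1 + x) ^ μb) w w' gw ∧
  gu =ᵐ[volume.restrict (Ioo (0 : ℝ) 1)] f ∧
  gw =ᵐ[volume.restrict (Ioo (-1 : ℝ) 0)] g ∧
  Tendsto w (𝓝[>] (-1 : ℝ)) (𝓝 0) ∧
  Tendsto u (𝓝[>] (0 : ℝ)) (𝓝 (w 0)) ∧
  Tendsto (fun x : ℝ => (x ^ μa : ℝ) • u' x) (𝓝[>] (0 : ℝ))
    (𝓝 ((((1 : ℝ) + 0) ^ μb : ℝ) • w' 0)) ∧
  (γ : ℂ) * u 1 + u' 1 = c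


/-- `(x - p) ^ (-μ)` is interval integrable when `μ < 1`. -/
lemma II_shift (p μ : ℝ) (hμ : μ < 1) (a b : ℝ) :
    IntervalIntegrable (fun t => (t - p) ^ (-μ)) volume a b := by
  have h := (intervalIntegral.intervalIntegrable_rpow' (a := a - p) (b := b - p)
    (r := -μ) (by linarith)).comp_sub_right p
  simpa using h

lemma II_shift_ofReal (p μ : ℝ) (hμ : μ < 1) (a b : ℝ) :
    IntervalIntegrable (fun t => (((t - p) ^ (-μ) : ℝ) : ℂ)) volume a b := by
  have h := II_shift p μ hμ a b
  exact ⟨h.1.ofReal, h.2.ofReal⟩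

/-- continuous functions are in L² of the restriction to a bounded interval -/
lemma memL2_of_continuous {a b : ℝ} {u : ℝ → ℂ} (hu : Continuous u) :
    MemLp u 2 (volume.restrict (Ioo a b)) := by
  haveI : Fact (volume (Ioo a b) < ⊤) := ⟨measure_Ioo_lt_top⟩
  obtain ⟨C, hC⟩ := isCompact_Icc.exists_bound_of_continuousOn (s := Icc a b) hu.continuousOn
  refine MemLp.of_bound hu.aestronglyMeasurable C ?_
  filter_upwards [ae_restrict_mem measurableSet_Ioo] with x hx
  exact hC x (Ioo_subset_Icc_self hx)

/-- weighted L² bound -/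
lemma memL2_weighted {a b : ℝ} {φ : ℝ → ℂ} {ρ : ℝ → ℝ}
    (hm : AEStronglyMeasurable φ (volume.restrict (Ioo a b)))
    (hρ : IntegrableOn ρ (Ioo a b))
    (hbound : ∀ x ∈ Ioo a b, ‖φ x‖ ^ 2 ≤ ρ x) :
    MemLp φ 2 (volume.restrict (Ioo a b)) := by
  rw [memLp_two_iff_integrable_sq_norm hm]
  refine Integrable.mono' hρ (hm.norm.pow 2) ?_
  filter_upwards [ae_restrict_mem measurableSet_Ioo] with x hx
  simpa [abs_of_nonneg (sq_nonneg ‖φ x‖)] using hbound x hx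

/-- congruence for interval integrals under a.e.-equality on an ambient open interval -/
lemma intervalIntegral_congr_ae_sub {φ ψ : ℝ → ℂ} {p q x y : ℝ}
    (h : φ =ᵐ[volume.restrict (Ioo p q)] ψ) (hx : p < x) (hxy : x ≤ y) (hy : y ≤ q) :
    ∫ t in x..y, φ t = ∫ t in x..y, ψ t := by
  apply intervalIntegral.integral_congr_ae
  have h' : ∀ᵐ t ∂volume, t ∈ Ioo p q → φ t = ψ t := (ae_restrict_iff' measurableSet_Ioo).1 h
  have h0 : ∀ᵐ (t : ℝ) ∂volume, t ≠ q := by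
    rw [ae_iff]
    simpa using measure_singleton q
  filter_upwards [h', h0] with t ht htq hmem
  rw [Set.uIoc_of_le hxy] at hmem
  exact ht ⟨lt_of_le_of_lt (le_of_lt hx) hmem.1 |>.trans_le le_rfl, lt_of_le_of_ne (hmem.2.trans hy) htq⟩

lemma build_sol (p q : ℝ) (hpq : p < q) (μ : ℝ) (hμ0 : 0 ≤ μ) (hμ1 : μ < 1)
    (ω : ℝ → ℝ) (hω : ∀ x, ω x = (x - p) ^ μ)
    (H : ℝ → ℂ) (hH : Continuous H)
    (φ : ℝ → ℂ) (hφ : ∀ a b : ℝ, IntervalIntegrable φ volume a b)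
    (hφ2 : MemLp φ 2 (volume.restrict (Ioo p q)))
    (hHφ : ∀ x y : ℝ, H y - H x = ∫ t in x..y, φ t)
    (C : ℂ) :
    MemV2C p q ω (fun x => C + ∫ t in p..x, H t * (((t - p) ^ (-μ) : ℝ) : ℂ))
      (fun x => H x * (((x - p) ^ (-μ) : ℝ) : ℂ)) φ ∧
    Continuous (fun x => C + ∫ t in p..x, H t * (((t - p) ^ (-μ) : ℝ) : ℂ)) ∧
    (∀ x, p < x → ω x • (H x * (((x - p) ^ (-μ) : ℝ) : ℂ)) = H x) := by
  set u' : ℝ → ℂ := fun x => H x * (((x - p) ^ (-μ) : ℝ) : ℂ) with hu'def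
  set u : ℝ → ℂ := fun x => C + ∫ t in p..x, u' t with hudef
  -- interval integrability of u'
  have hII : ∀ a b : ℝ, IntervalIntegrable u' volume a b := by
    intro a b
    exact (II_shift_ofReal p μ hμ1 a b).continuousOn_mul hH.continuousOn
  have hu_cont : Continuous u :=
    continuous_const.add (intervalIntegral.continuous_primitive hII p)
  -- key pointwise identity
  have hkey : ∀ x, p < x → ω x • u' x = H x := by
    intro x hx
    have hxp : (0:ℝ) < x - p := by linarith
    have h1 : (x - p) ^ μ * (x - p) ^ (-μ) = 1 := by
      rw [← Real.rpow_add hxp]; simp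
    rw [hω x, Complex.real_smul]
    have h2 : (((x - p) ^ μ : ℝ) : ℂ) * (H x * (((x - p) ^ (-μ) : ℝ) : ℂ))
        = H x * ((((x - p) ^ μ * (x - p) ^ (-μ) : ℝ)) : ℂ) := by push_cast; ring
    rw [h2, h1]
    simp
  -- FTC for u
  have hFTCu : ∀ x y : ℝ, p < x → x ≤ y → y ≤ q →
      IntervalIntegrable u' volume x y ∧ u y - u x = ∫ t in x..y, u' t := by
    intro x y _ _ _
    refine ⟨hII x y, ?_⟩
    simp only [hudef]
    rw [add_sub_add_left_eq_sub]
    exact intervalIntegral.integral_interval_sub_left (hII p y) (hII p x)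
  -- continuity of ω and bound of H
  have hωc : Continuous ω := by
    have : Continuous fun x : ℝ => (x - p) ^ μ := by
      apply continuous_iff_continuousAt.2
      intro x
      exact (Real.continuousAt_rpow_const _ _ (Or.inr hμ0)).comp
        (by fun_prop)
    simpa [funext hω] using this
  obtain ⟨M, hM⟩ := isCompact_Icc.exists_bound_of_continuousOn
    (s := Icc p q) hH.continuousOn
  have hM0 : 0 ≤ M := le_trans (norm_nonneg _) (hM p (by constructor <;> linarith))
  -- measurability of u' on the interval
  have hu'm : AEStronglyMeasurable u' (volume.restrict (Ioo p q)) := by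
    have hco : ContinuousOn u' (Ioo p q) := by
      intro x hx
      apply ContinuousWithinAt.mul (hH.continuousOn x hx)
      apply ContinuousAt.continuousWithinAt
      apply Complex.continuous_ofReal.continuousAt.comp
      exact (continuousAt_id.sub continuousAt_const).rpow_const
        (Or.inl (sub_ne_zero.2 (ne_of_gt hx.1)))
    exact hco.aestronglyMeasurable measurableSet_Ioo
  -- L² memberships
  have hmem_u : MemLp u 2 (volume.restrict (Ioo p q)) := memL2_of_continuous hu_cont
  have hmem_ωu' : MemLp (fun x => ω x • u' x) 2 (volume.restrict (Ioo p q)) := by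
    refine (memL2_of_continuous hH).ae_eq ?_
    filter_upwards [ae_restrict_mem measurableSet_Ioo] with x hx
    exact (hkey x hx.1).symm
  have hmem_sqrt : MemLp (fun x => Real.sqrt (ω x) • u' x) 2 (volume.restrict (Ioo p q)) := by
    refine memL2_weighted ?_ (ρ := fun x => M ^ 2 * (x - p) ^ (-μ)) ?_ ?_
    · exact (((hωc.comp continuous_id).sqrt).aestronglyMeasurable.restrict).smul hu'm
    · exact (((II_shift p μ hμ1 p q).1).mono_set Ioo_subset_Ioc_self).const_mul _
    · intro x hx
      have hxp : (0:ℝ) < x - p := by have := hx.1; linarith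
      have hωx : ω x = (x - p) ^ μ := hω x
      have hHx : ‖H x‖ ≤ M := hM x (Ioo_subset_Icc_self hx)
      have h1 : ‖Real.sqrt (ω x) • u' x‖ ^ 2
          = ω x * (‖H x‖ ^ 2 * ((x - p) ^ (-μ)) ^ 2) := by
        rw [norm_smul]
        have hω0 : 0 ≤ ω x := by rw [hωx]; positivity
        rw [hu'def]
        simp only [norm_mul, Complex.norm_real, Real.norm_eq_abs]
        rw [abs_of_nonneg (Real.sqrt_nonneg _), abs_of_nonneg (by positivity : (0:ℝ) ≤ (x - p) ^ (-μ))]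
        rw [mul_pow, mul_pow, Real.sq_sqrt hω0]
      rw [h1, hωx]
      have h2 : (x - p) ^ μ * (((x - p) ^ (-μ)) ^ 2) = (x - p) ^ (-μ) := by
        rw [← Real.rpow_natCast ((x - p) ^ (-μ)) 2, ← Real.rpow_mul (le_of_lt hxp),
          ← Real.rpow_add hxp]
        congr 1; ring
      calc (x - p) ^ μ * (‖H x‖ ^ 2 * ((x - p) ^ (-μ)) ^ 2)
          = ‖H x‖ ^ 2 * ((x - p) ^ μ * ((x - p) ^ (-μ)) ^ 2) := by ring
        _ = ‖H x‖ ^ 2 * (x - p) ^ (-μ) := by rw [h2]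
        _ ≤ M ^ 2 * (x - p) ^ (-μ) := by
            apply mul_le_mul_of_nonneg_right _ (by positivity)
            exact pow_le_pow_left₀ (norm_nonneg _) hHx 2
  -- FTC for ω u'
  have hFTCω : ∀ x y : ℝ, p < x → x ≤ y → y ≤ q →
      IntervalIntegrable φ volume x y ∧ ω y • u' y - ω x • u' x = ∫ t in x..y, φ t := by
    intro x y hx hxy hy
    refine ⟨hφ x y, ?_⟩
    rw [hkey x hx, hkey y (lt_of_lt_of_le hx hxy)]
    exact hHφ x y
  exact ⟨⟨⟨hmem_u, hFTCu, hmem_sqrt⟩, hmem_ωu', hφ2, hFTCω⟩, hu_cont, hkey⟩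

lemma sol_unique (γ μa μb : ℝ) (hγ : 0 < γ)
    (hμa0 : 0 ≤ μa) (hμa1 : μa < 1) (hμb0 : 0 ≤ μb) (hμb1 : μb < 1)
    (f g : ℝ → ℂ) (c : ℂ) {u u' gu w w' gw u₁ u₁' gu₁ w₁ w₁' gw₁ : ℝ → ℂ}
    (h : SolWeak γ μa μb f g c u u' gu w w' gw)
    (h₁ : SolWeak γ μa μb f g c u₁ u₁' gu₁ w₁ w₁' gw₁) :
    (∀ x ∈ Ioc (0 : ℝ) 1, u₁ x = u x) ∧ (∀ x ∈ Ioc (-1 : ℝ) 0, w₁ x = w x) := by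
  obtain ⟨huV2, hwV2, hgu_ae, hgw_ae, hwlim, hulim, htrans, hbc⟩ := h
  obtain ⟨huV2₁, hwV2₁, hgu_ae₁, hgw_ae₁, hwlim₁, hulim₁, htrans₁, hbc₁⟩ := h₁
  set K : ℂ := (((1 : ℝ) + 0) ^ μb : ℝ) • w₁' 0 - (((1 : ℝ) + 0) ^ μb : ℝ) • w' 0 with hKdef
  -- gw₁ = gw a.e., gu₁ = gu a.e.
  have hgw_eq : gw₁ =ᵐ[volume.restrict (Ioo (-1 : ℝ) 0)] gw := hgw_ae₁.trans hgw_ae.symm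
  have hgu_eq : gu₁ =ᵐ[volume.restrict (Ioo (0 : ℝ) 1)] gu := hgu_ae₁.trans hgu_ae.symm
  -- b-side weighted derivative difference is constant = K
  have hbside : ∀ x ∈ Ioc (-1 : ℝ) 0,
      (((1 + x) ^ μb : ℝ)) • w₁' x - (((1 + x) ^ μb : ℝ)) • w' x = K := by
    intro x hx
    have ftc₁ := hwV2₁.2.2.2 x 0 hx.1 hx.2 le_rfl
    have ftc := hwV2.2.2.2 x 0 hx.1 hx.2 le_rfl
    have hint_eq : ∫ t in x..(0:ℝ), gw₁ t = ∫ t in x..(0:ℝ), gw t :=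
      intervalIntegral_congr_ae_sub hgw_eq hx.1 hx.2 le_rfl
    have e1 := ftc₁.2
    have e2 := ftc.2
    rw [hKdef]
    simp only [Complex.real_smul] at e1 e2 ⊢
    linear_combination e2 - e1 - hint_eq
  -- a-side weighted derivative difference is constant
  have haside : ∀ x ∈ Ioc (0 : ℝ) 1,
      ((x ^ μa : ℝ)) • u₁' x - ((x ^ μa : ℝ)) • u' x
        = (((1 : ℝ) ^ μa : ℝ)) • u₁' 1 - (((1 : ℝ) ^ μa : ℝ)) • u' 1 := by
    intro x hx
    have ftc₁ := huV2₁.2.2.2 x 1 hx.1 hx.2 le_rfl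
    have ftc := huV2.2.2.2 x 1 hx.1 hx.2 le_rfl
    have hint_eq : ∫ t in x..(1:ℝ), gu₁ t = ∫ t in x..(1:ℝ), gu t :=
      intervalIntegral_congr_ae_sub hgu_eq hx.1 hx.2 le_rfl
    have e1 := ftc₁.2
    have e2 := ftc.2
    simp only [Complex.real_smul] at e1 e2 ⊢
    linear_combination e2 - e1 - hint_eq
  -- the a-side constant equals K via the transmission conditions
  have hKa : (((1 : ℝ) ^ μa : ℝ)) • u₁' 1 - (((1 : ℝ) ^ μa : ℝ)) • u' 1 = K := by
    have T1 : Tendsto (fun x : ℝ => ((x ^ μa : ℝ)) • u₁' x - ((x ^ μa : ℝ)) • u' x)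
        (𝓝[>] (0:ℝ)) (𝓝 K) := htrans₁.sub htrans
    have T2 : Tendsto (fun x : ℝ => ((x ^ μa : ℝ)) • u₁' x - ((x ^ μa : ℝ)) • u' x)
        (𝓝[>] (0:ℝ)) (𝓝 ((((1 : ℝ) ^ μa : ℝ)) • u₁' 1 - (((1 : ℝ) ^ μa : ℝ)) • u' 1)) := by
      refine Tendsto.congr' ?_ tendsto_const_nhds
      filter_upwards [Ioo_mem_nhdsGT_of_mem (⟨le_rfl, one_pos⟩ : (0:ℝ) ∈ Ico (0:ℝ) 1)] with x hx
      exact (haside x ⟨hx.1, hx.2.le⟩).symm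
    exact tendsto_nhds_unique T2 T1
  have haside' : ∀ x ∈ Ioc (0 : ℝ) 1,
      ((x ^ μa : ℝ)) • u₁' x - ((x ^ μa : ℝ)) • u' x = K := fun x hx => (haside x hx).trans hKa
  -- derivative differences
  have hderiv_a : ∀ t ∈ Ioc (0 : ℝ) 1, u₁' t - u' t = (((t - 0) ^ (-μa) : ℝ) : ℂ) * K := by
    intro t ht
    have h1 : (t ^ μa : ℝ) • (u₁' t - u' t) = K := by
      rw [smul_sub]; exact haside' t ht
    have h2 : ((t ^ (-μa) : ℝ)) • ((t ^ μa : ℝ) • (u₁' t - u' t)) = ((t ^ (-μa) : ℝ)) • K := by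
      rw [h1]
    rw [smul_smul] at h2
    have h3 : t ^ (-μa) * t ^ μa = 1 := by
      rw [← Real.rpow_add ht.1]; simp
    rw [h3, one_smul] at h2
    rw [h2, sub_zero, Complex.real_smul]
  have hderiv_b : ∀ t ∈ Ioc (-1 : ℝ) 0, w₁' t - w' t = (((t - (-1)) ^ (-μb) : ℝ) : ℂ) * K := by
    intro t ht
    have h1 : ((1 + t) ^ μb : ℝ) • (w₁' t - w' t) = K := by
      rw [smul_sub]; exact hbside t ht
    have h2 : (((1 + t) ^ (-μb) : ℝ)) • (((1 + t) ^ μb : ℝ) • (w₁' t - w' t))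
        = (((1 + t) ^ (-μb) : ℝ)) • K := by rw [h1]
    rw [smul_smul] at h2
    have ht1 : (0:ℝ) < 1 + t := by linarith [ht.1]
    have h3 : (1 + t) ^ (-μb) * (1 + t) ^ μb = 1 := by
      rw [← Real.rpow_add ht1]; simp
    rw [h3, one_smul] at h2
    rw [h2, sub_neg_eq_add, add_comm t 1, Complex.real_smul]
  -- primitives of the weights
  set Qa : ℝ → ℝ := fun z => ∫ t in (0:ℝ)..z, (t - 0) ^ (-μa) with hQa
  set Qb : ℝ → ℝ := fun z => ∫ t in (-1:ℝ)..z, (t - (-1)) ^ (-μb) with hQb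
  have hQa_cont : Continuous Qa := intervalIntegral.continuous_primitive (II_shift 0 μa hμa1) 0
  have hQb_cont : Continuous Qb := intervalIntegral.continuous_primitive (II_shift (-1) μb hμb1) (-1)
  -- integrated difference formulas
  have hint_a : ∀ x y : ℝ, 0 < x → x ≤ y → y ≤ 1 →
      (u₁ y - u y) - (u₁ x - u x) = ((Qa y - Qa x : ℝ) : ℂ) * K := by
    intro x y hx hxy hy
    have f₁ := huV2₁.1.2.1 x y hx hxy hy
    have f₂ := huV2.1.2.1 x y hx hxy hy
    have hsub : (u₁ y - u y) - (u₁ x - u x) = (∫ t in x..y, u₁' t) - ∫ t in x..y, u' t := by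
      linear_combination f₁.2 - f₂.2
    rw [hsub, ← intervalIntegral.integral_sub f₁.1 f₂.1]
    have hcg : ∫ t in x..y, (u₁' t - u' t) = ∫ t in x..y, (((t - 0) ^ (-μa) : ℝ) : ℂ) * K := by
      apply intervalIntegral.integral_congr
      intro t ht
      rw [uIcc_of_le hxy] at ht
      exact hderiv_a t ⟨lt_of_lt_of_le hx ht.1, ht.2.trans hy⟩
    rw [hcg, intervalIntegral.integral_mul_const]
    congr 1
    have hq : Qa y - Qa x = ∫ t in x..y, (t - 0) ^ (-μa) :=
      intervalIntegral.integral_interval_sub_left (II_shift 0 μa hμa1 0 y)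
        (II_shift 0 μa hμa1 0 x)
    rw [hq]
    exact intervalIntegral.integral_ofReal
  have hint_b : ∀ x y : ℝ, -1 < x → x ≤ y → y ≤ 0 →
      (w₁ y - w y) - (w₁ x - w x) = ((Qb y - Qb x : ℝ) : ℂ) * K := by
    intro x y hx hxy hy
    have f₁ := hwV2₁.1.2.1 x y hx hxy hy
    have f₂ := hwV2.1.2.1 x y hx hxy hy
    have hsub : (w₁ y - w y) - (w₁ x - w x) = (∫ t in x..y, w₁' t) - ∫ t in x..y, w' t := by
      linear_combination f₁.2 - f₂.2
    rw [hsub, ← intervalIntegral.integral_sub f₁.1 f₂.1]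
    have hcg : ∫ t in x..y, (w₁' t - w' t) = ∫ t in x..y, (((t - (-1)) ^ (-μb) : ℝ) : ℂ) * K := by
      apply intervalIntegral.integral_congr
      intro t ht
      rw [uIcc_of_le hxy] at ht
      exact hderiv_b t ⟨lt_of_lt_of_le hx ht.1, ht.2.trans hy⟩
    rw [hcg, intervalIntegral.integral_mul_const]
    congr 1
    have hq : Qb y - Qb x = ∫ t in x..y, (t - (-1)) ^ (-μb) :=
      intervalIntegral.integral_interval_sub_left (II_shift (-1) μb hμb1 (-1) y)
        (II_shift (-1) μb hμb1 (-1) x)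
    rw [hq]
    exact intervalIntegral.integral_ofReal
  -- value formulas via limits
  have hval_a : ∀ y ∈ Ioc (0:ℝ) 1, u₁ y - u y = (w₁ 0 - w 0) + ((Qa y : ℝ) : ℂ) * K := by
    intro y hy
    have T1 : Tendsto (fun x : ℝ => (u₁ y - u y) - (u₁ x - u x)) (𝓝[>] (0:ℝ))
        (𝓝 ((u₁ y - u y) - (w₁ 0 - w 0))) := tendsto_const_nhds.sub (hulim₁.sub hulim)
    have T2 : Tendsto (fun x : ℝ => ((Qa y - Qa x : ℝ) : ℂ) * K) (𝓝[>] (0:ℝ))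
        (𝓝 (((Qa y - Qa 0 : ℝ) : ℂ) * K)) := by
      apply Tendsto.mono_left _ nhdsWithin_le_nhds
      exact ((Complex.continuous_ofReal.comp
        (continuous_const.sub hQa_cont)).mul continuous_const).tendsto 0
    have Eeq : (fun x : ℝ => (u₁ y - u y) - (u₁ x - u x))
        =ᶠ[𝓝[>] (0:ℝ)] fun x => ((Qa y - Qa x : ℝ) : ℂ) * K := by
      filter_upwards [Ioo_mem_nhdsGT_of_mem (⟨le_rfl, hy.1⟩ : (0:ℝ) ∈ Ico (0:ℝ) y)] with x hx
      exact hint_a x y hx.1 hx.2.le hy.2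
    have := tendsto_nhds_unique (T1.congr' Eeq) T2
    have hQa0 : Qa 0 = 0 := intervalIntegral.integral_same
    rw [hQa0] at this
    push_cast at this ⊢
    linear_combination this
  have hval_b : ∀ y ∈ Ioc (-1:ℝ) 0, w₁ y - w y = ((Qb y : ℝ) : ℂ) * K := by
    intro y hy
    have T1 : Tendsto (fun x : ℝ => (w₁ y - w y) - (w₁ x - w x)) (𝓝[>] (-1:ℝ))
        (𝓝 ((w₁ y - w y) - (0 - 0))) := tendsto_const_nhds.sub (hwlim₁.sub hwlim)
    have T2 : Tendsto (fun x : ℝ => ((Qb y - Qb x : ℝ) : ℂ) * K) (𝓝[>] (-1:ℝ))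
        (𝓝 (((Qb y - Qb (-1) : ℝ) : ℂ) * K)) := by
      apply Tendsto.mono_left _ nhdsWithin_le_nhds
      exact ((Complex.continuous_ofReal.comp
        (continuous_const.sub hQb_cont)).mul continuous_const).tendsto (-1)
    have Eeq : (fun x : ℝ => (w₁ y - w y) - (w₁ x - w x))
        =ᶠ[𝓝[>] (-1:ℝ)] fun x => ((Qb y - Qb x : ℝ) : ℂ) * K := by
      filter_upwards [Ioo_mem_nhdsGT_of_mem (⟨le_rfl, hy.1⟩ : (-1:ℝ) ∈ Ico (-1:ℝ) y)] with x hx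
      exact hint_b x y hx.1 hx.2.le hy.2
    have := tendsto_nhds_unique (T1.congr' Eeq) T2
    have hQb0 : Qb (-1) = 0 := intervalIntegral.integral_same
    rw [hQb0] at this
    push_cast at this ⊢
    linear_combination this
  -- K = 0 from the Robin boundary condition
  have hKzero : K = 0 := by
    have hu'1 : u₁' 1 - u' 1 = K := by
      have := haside' 1 ⟨one_pos, le_rfl⟩
      rwa [Real.one_rpow, one_smul, one_smul] at this
    have hu1 : u₁ 1 - u 1 = ((Qb 0 : ℝ) : ℂ) * K + ((Qa 1 : ℝ) : ℂ) * K := by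
      have h1 := hval_a 1 ⟨one_pos, le_rfl⟩
      have h2 := hval_b 0 ⟨by norm_num, le_rfl⟩
      rw [h2] at h1
      exact h1
    have hcomb : (γ : ℂ) * (u₁ 1 - u 1) + (u₁' 1 - u' 1) = 0 := by
      linear_combination hbc₁ - hbc
    rw [hu1, hu'1] at hcomb
    have hfact : (((γ * (Qb 0 + Qa 1) + 1 : ℝ)) : ℂ) * K = 0 := by
      push_cast
      linear_combination hcomb
    have hQa1 : 0 ≤ Qa 1 := by
      apply intervalIntegral.integral_nonneg (by norm_num)
      intro t ht
      exact Real.rpow_nonneg (by linarith [ht.1]) _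
    have hQb0' : 0 ≤ Qb 0 := by
      apply intervalIntegral.integral_nonneg (by norm_num)
      intro t ht
      exact Real.rpow_nonneg (by linarith [ht.1]) _
    have hpos : (0:ℝ) < γ * (Qb 0 + Qa 1) + 1 := by nlinarith
    have := mul_eq_zero.1 hfact
    rcases this with h | h
    · exact absurd h (Complex.ofReal_ne_zero.2 (ne_of_gt hpos))
    · exact h
  constructor
  · intro x hx
    have := hval_a x hx
    rw [hKzero, hval_b 0 ⟨by norm_num, le_rfl⟩] at this
    rw [hKzero] at this
    simp only [mul_zero, add_zero, zero_add] at this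
    exact sub_eq_zero.1 (by linear_combination this)
  · intro x hx
    have := hval_b x hx
    rw [hKzero] at this
    simp only [mul_zero] at this
    exact sub_eq_zero.1 this

/-- For every `f ∈ L²(0,1)`, `g ∈ L²(-1,0)` and `c ∈ ℂ` there is a unique
pair `(u, w)` (unique as functions on `(0,1]` and `(-1,0]` respectively) with `u ∈ V²_a(0,1)`,
`w ∈ V²_b(-1,0)` solving the boundary value problem `SolWeak`. -/
theorem surjective_weak (γ μa μb : ℝ) (hγ : 0 < γ)
    (hμa0 : 0 ≤ μa) (hμa1 : μa < 1) (hμb0 : 0 ≤ μb) (hμb1 : μb < 1)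
    (f g : ℝ → ℂ) (c : ℂ)
    (hf : MemLp f 2 (volume.restrict (Ioo (0 : ℝ) 1)))
    (hg : MemLp g 2 (volume.restrict (Ioo (-1 : ℝ) 0))) :
    ∃ u u' gu w w' gw : ℝ → ℂ, SolWeak γ μa μb f g c u u' gu w w' gw ∧
      ∀ u₁ u₁' gu₁ w₁ w₁' gw₁ : ℝ → ℂ, SolWeak γ μa μb f g c u₁ u₁' gu₁ w₁ w₁' gw₁ →
        (∀ x ∈ Ioc (0 : ℝ) 1, u₁ x = u x) ∧ (∀ x ∈ Ioc (-1 : ℝ) 0, w₁ x = w x) := by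
  -- indicator versions of the data
  haveI : Fact (volume (Ioo (0:ℝ) 1) < ⊤) := ⟨measure_Ioo_lt_top⟩
  haveI : Fact (volume (Ioo (-1:ℝ) 0) < ⊤) := ⟨measure_Ioo_lt_top⟩
  set fI : ℝ → ℂ := (Ioo (0:ℝ) 1).indicator f with hfIdef
  set gI : ℝ → ℂ := (Ioo (-1:ℝ) 0).indicator g with hgIdef
  have hfae : fI =ᵐ[volume.restrict (Ioo (0:ℝ) 1)] f :=
    indicator_ae_eq_restrict measurableSet_Ioo
  have hgae : gI =ᵐ[volume.restrict (Ioo (-1:ℝ) 0)] g :=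
    indicator_ae_eq_restrict measurableSet_Ioo
  have hfI2 : MemLp fI 2 (volume.restrict (Ioo (0:ℝ) 1)) := hf.ae_eq hfae.symm
  have hgI2 : MemLp gI 2 (volume.restrict (Ioo (-1:ℝ) 0)) := hg.ae_eq hgae.symm
  have hfIint : Integrable fI volume := by
    rw [hfIdef, integrable_indicator_iff measurableSet_Ioo]
    exact hf.integrable (by norm_num)
  have hgIint : Integrable gI volume := by
    rw [hgIdef, integrable_indicator_iff measurableSet_Ioo]
    exact hg.integrable (by norm_num)
  have hfII : ∀ a b : ℝ, IntervalIntegrable fI volume a b := fun a b => hfIint.intervalIntegrable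
  have hgII : ∀ a b : ℝ, IntervalIntegrable gI volume a b := fun a b => hgIint.intervalIntegrable
  -- primitives
  set F : ℝ → ℂ := fun x => ∫ t in (0:ℝ)..x, fI t with hFdef
  set G : ℝ → ℂ := fun x => ∫ t in (-1:ℝ)..x, gI t with hGdef
  have hFc : Continuous F := intervalIntegral.continuous_primitive hfII 0
  have hGc : Continuous G := intervalIntegral.continuous_primitive hgII (-1)
  have hFftc : ∀ x y : ℝ, F y - F x = ∫ t in x..y, fI t := fun x y =>
    intervalIntegral.integral_interval_sub_left (hfII 0 y) (hfII 0 x)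
  have hGftc : ∀ x y : ℝ, G y - G x = ∫ t in x..y, gI t := fun x y =>
    intervalIntegral.integral_interval_sub_left (hgII (-1) y) (hgII (-1) x)
  have hF0 : F 0 = 0 := intervalIntegral.integral_same
  -- constants
  set Ia : ℝ := ∫ t in (0:ℝ)..1, (t - 0) ^ (-μa) with hIadef
  set Ib : ℝ := ∫ t in (-1:ℝ)..0, (t - (-1)) ^ (-μb) with hIbdef
  set Ca : ℂ := ∫ t in (0:ℝ)..1, F t * (((t - 0) ^ (-μa) : ℝ) : ℂ) with hCadef
  set Cb : ℂ := ∫ t in (-1:ℝ)..0, G t * (((t - (-1)) ^ (-μb) : ℝ) : ℂ) with hCbdef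
  have hIa0 : 0 ≤ Ia := by
    apply intervalIntegral.integral_nonneg (by norm_num)
    exact fun t ht => Real.rpow_nonneg (by linarith [ht.1]) _
  have hIb0 : 0 ≤ Ib := by
    apply intervalIntegral.integral_nonneg (by norm_num)
    exact fun t ht => Real.rpow_nonneg (by linarith [ht.1]) _
  have hposden : (0:ℝ) < γ * (Ia + Ib) + 1 := by nlinarith
  have hden : ((γ : ℂ) * ((Ia : ℂ) + (Ib : ℂ)) + 1) ≠ 0 := by
    have h := Complex.ofReal_ne_zero.2 (ne_of_gt hposden)
    push_cast at h
    exact h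
  set B : ℂ := (c - (γ:ℂ) * (Cb + G 0 * (Ia:ℂ) + Ca) - G 0 - F 1) /
      ((γ:ℂ) * ((Ia:ℂ) + (Ib:ℂ)) + 1) with hBdef
  -- build w
  set Hw : ℝ → ℂ := fun t => B + G t with hHwdef
  set w' : ℝ → ℂ := fun x => Hw x * (((x - (-1)) ^ (-μb) : ℝ) : ℂ) with hw'def
  set w : ℝ → ℂ := fun x => (0:ℂ) + ∫ t in (-1:ℝ)..x, w' t with hwdef
  have hHwφ : ∀ x y : ℝ, Hw y - Hw x = ∫ t in x..y, gI t := by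
    intro x y
    have := hGftc x y
    simp only [hHwdef]
    linear_combination this
  have hbw : MemV2C (-1) 0 (fun x => (1 + x) ^ μb) w w' gI ∧ Continuous w ∧
      (∀ x, -1 < x → (1 + x) ^ μb • w' x = Hw x) := by
    have := build_sol (-1) 0 (by norm_num) μb hμb0 hμb1 (fun x => (1 + x) ^ μb)
      (fun x => by rw [sub_neg_eq_add, add_comm]) Hw (continuous_const.add hGc)
      gI hgII hgI2 hHwφ 0
    exact this
  obtain ⟨hwV2, hw_cont, hwkey⟩ := hbw
  -- build u
  set Hu : ℝ → ℂ := fun t => B + G 0 + F t with hHudef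
  set u' : ℝ → ℂ := fun x => Hu x * (((x - 0) ^ (-μa) : ℝ) : ℂ) with hu'def
  set u : ℝ → ℂ := fun x => w 0 + ∫ t in (0:ℝ)..x, u' t with hudef
  have hHuφ : ∀ x y : ℝ, Hu y - Hu x = ∫ t in x..y, fI t := by
    intro x y
    have := hFftc x y
    simp only [hHudef]
    linear_combination this
  have hbu : MemV2C 0 1 (fun x => x ^ μa) u u' fI ∧ Continuous u ∧
      (∀ x, 0 < x → x ^ μa • u' x = Hu x) := by
    have := build_sol 0 1 one_pos μa hμa0 hμa1 (fun x => x ^ μa)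
      (fun x => by rw [sub_zero]) Hu (continuous_const.add hFc)
      fI hfII hfI2 hHuφ (w 0)
    exact this
  obtain ⟨huV2, hu_cont, hukey⟩ := hbu
  -- value of w' at 0 and Hw at 0
  have hw'0 : ((1:ℝ) + 0) ^ μb • w' 0 = B + G 0 := by
    have := hwkey 0 (by norm_num)
    rw [this, hHwdef]
  -- boundary values
  have hw_neg1 : w (-1) = 0 := by simp [hwdef]
  have hu_0 : u 0 = w 0 := by simp [hudef]
  -- the six boundary/limit conditions
  have cond_wlim : Tendsto w (𝓝[>] (-1:ℝ)) (𝓝 0) := by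
    have := (hw_cont.tendsto (-1)).mono_left (nhdsWithin_le_nhds (s := Ioi (-1:ℝ)))
    rwa [hw_neg1] at this
  have cond_ulim : Tendsto u (𝓝[>] (0:ℝ)) (𝓝 (w 0)) := by
    have := (hu_cont.tendsto 0).mono_left (nhdsWithin_le_nhds (s := Ioi (0:ℝ)))
    rwa [hu_0] at this
  have cond_trans : Tendsto (fun x : ℝ => (x ^ μa : ℝ) • u' x) (𝓝[>] (0:ℝ))
      (𝓝 ((((1:ℝ) + 0) ^ μb : ℝ) • w' 0)) := by
    rw [hw'0]
    have hHu0 : Hu 0 = B + G 0 := by rw [hHudef]; simp [hF0]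
    have hHu_cont : Continuous Hu := by rw [hHudef]; exact continuous_const.add hFc
    have T : Tendsto Hu (𝓝[>] (0:ℝ)) (𝓝 (B + G 0)) := by
      have := (hHu_cont.tendsto 0).mono_left (nhdsWithin_le_nhds (s := Ioi (0:ℝ)))
      rwa [hHu0] at this
    refine Tendsto.congr' ?_ T
    filter_upwards [self_mem_nhdsWithin] with x hx
    exact (hukey x hx).symm
  -- the Robin boundary condition
  have hu'1 : u' 1 = B + G 0 + F 1 := by
    have h1 : ((1:ℝ) - 0) ^ (-μa) = 1 := by norm_num
    rw [hu'def]
    simp only [h1, Complex.ofReal_one, mul_one, hHudef]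
  have hintu1 : ∫ t in (0:ℝ)..1, u' t = (B + G 0) * (Ia : ℂ) + Ca := by
    have hi1 : IntervalIntegrable (fun t => (B + G 0) * (((t - 0) ^ (-μa) : ℝ) : ℂ))
        volume 0 1 := (II_shift_ofReal 0 μa hμa1 0 1).const_mul _
    have hi2 : IntervalIntegrable (fun t => F t * (((t - 0) ^ (-μa) : ℝ) : ℂ))
        volume 0 1 := (II_shift_ofReal 0 μa hμa1 0 1).continuousOn_mul hFc.continuousOn
    have hsplit : ∫ t in (0:ℝ)..1, u' t =
        (∫ t in (0:ℝ)..1, (B + G 0) * (((t - 0) ^ (-μa) : ℝ) : ℂ)) +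
        ∫ t in (0:ℝ)..1, F t * (((t - 0) ^ (-μa) : ℝ) : ℂ) := by
      rw [← intervalIntegral.integral_add hi1 hi2]
      apply intervalIntegral.integral_congr
      intro t _
      rw [hu'def, hHudef]
      ring
    rw [hsplit, intervalIntegral.integral_const_mul, intervalIntegral.integral_ofReal,
      ← hCadef, ← hIadef]
  have hintw0 : w 0 = B * (Ib : ℂ) + Cb := by
    have hi1 : IntervalIntegrable (fun t => B * (((t - (-1)) ^ (-μb) : ℝ) : ℂ))
        volume (-1) 0 := (II_shift_ofReal (-1) μb hμb1 (-1) 0).const_mul _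
    have hi2 : IntervalIntegrable (fun t => G t * (((t - (-1)) ^ (-μb) : ℝ) : ℂ))
        volume (-1) 0 := (II_shift_ofReal (-1) μb hμb1 (-1) 0).continuousOn_mul hGc.continuousOn
    have hsplit : ∫ t in (-1:ℝ)..0, w' t =
        (∫ t in (-1:ℝ)..0, B * (((t - (-1)) ^ (-μb) : ℝ) : ℂ)) +
        ∫ t in (-1:ℝ)..0, G t * (((t - (-1)) ^ (-μb) : ℝ) : ℂ) := by
      rw [← intervalIntegral.integral_add hi1 hi2]
      apply intervalIntegral.integral_congr
      intro t _
      rw [hw'def, hHwdef]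
      ring
    rw [hwdef]
    simp only [zero_add]
    rw [hsplit, intervalIntegral.integral_const_mul, intervalIntegral.integral_ofReal,
      ← hCbdef, ← hIbdef]
  have cond_robin : (γ : ℂ) * u 1 + u' 1 = c := by
    have hu1 : u 1 = w 0 + ((B + G 0) * (Ia : ℂ) + Ca) := by
      rw [hudef]; simp only []; rw [hintu1]
    rw [hu1, hintw0, hu'1, hBdef]
    field_simp
    ring
  -- assemble
  refine ⟨u, u', fI, w, w', gI, ⟨huV2, hwV2, hfae, hgae, cond_wlim, cond_ulim, cond_trans,
    cond_robin⟩, ?_⟩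
  intro u₁ u₁' gu₁ w₁ w₁' gw₁ h₁
  exact sol_unique γ μa μb hγ hμa0 hμa1 hμb0 hμb1 f g c
    ⟨huV2, hwV2, hfae, hgae, cond_wlim, cond_ulim, cond_trans, cond_robin⟩ h₁
end

section
/- Let γ > 0, 0 ≤ μ_a < 1, 0 ≤ μ_b < 1, a(x) = x^{μ_a} on [0,1], b(x) = (1+x)^{μ_b} на [−1,0]. Suppose u ∈ V²_a(0,1) and w ∈ V²_b(−1,0) satisfy (a u')' = f a.e. on (0,1) with f ∈ L²(0,1), (b w')' = g a.e. on (−1,0) with g ∈ L²(−1,0), w(−1) = 0, u(0) = w(0), lim_{x→0⁺}(a u')(x) = (b w')(0), and γ u(1) + u'(1) = c. Then (b w')(0) = (1 + γ/(1−μ_a) + γ/(1−μ_b))^{−1} · ( c − ∫₀¹ f(r) dr − γ·∫₀¹ a(s)^{−1} (∫₀^s f(r) dr) ds + γ·∫_{−1}^0 b(s)^{−1} (∫_s^0 g(r) dr) ds ). -/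
open MeasureTheory Set Filter Topology

open intervalIntegral
section Helpers

lemma ind_int_eq (h : ℝ → ℂ) {a b x y : ℝ} (hax : a ≤ x) (hxy : x ≤ y) (hyb : y ≤ b) :
    ∫ t in x..y, (Ioc a b).indicator h t = ∫ t in x..y, h t := by
  rw [intervalIntegral.integral_of_le hxy, intervalIntegral.integral_of_le hxy,
    MeasureTheory.setIntegral_indicator measurableSet_Ioc,
    Set.inter_eq_left.mpr (Set.Ioc_subset_Ioc hax hyb)]

lemma tendsto_prim (h : ℝ → ℂ) (hint : Integrable h) (b a₀ : ℝ) :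
    Tendsto (fun x => ∫ t in x..b, h t) (𝓝[>] a₀) (𝓝 (∫ t in a₀..b, h t)) := by
  have hc : Continuous fun x => ∫ t in x..b, h t := by
    have := hint.continuous_primitive b
    have : Continuous fun x => -∫ t in b..x, h t := this.neg
    simpa [intervalIntegral.integral_symm b] using this
  exact (hc.tendsto a₀).mono_left nhdsWithin_le_nhds

lemma rpow_int_val {μ : ℝ} (h0 : 0 ≤ μ) (h1 : μ < 1) :
    ∫ s in Ioc (0:ℝ) 1, ((s ^ μ : ℝ) : ℂ)⁻¹ = ((1 - μ)⁻¹ : ℝ) := by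
  have key : ∫ s in Ioc (0:ℝ) 1, ((s ^ μ)⁻¹ : ℝ) = (1 - μ)⁻¹ := by
    have h2 : ∫ s in Ioc (0:ℝ) 1, ((s ^ μ)⁻¹ : ℝ) = ∫ s in Ioc (0:ℝ) 1, (s ^ (-μ) : ℝ) := by
      refine setIntegral_congr_fun measurableSet_Ioc (fun s hs => ?_)
      rw [Real.rpow_neg hs.1.le]
    rw [h2, ← intervalIntegral.integral_of_le zero_le_one, integral_rpow (Or.inl (by linarith))]
    rw [Real.one_rpow, Real.zero_rpow (by linarith)]
    ring
  calc ∫ s in Ioc (0:ℝ) 1, ((s ^ μ : ℝ) : ℂ)⁻¹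
      = ∫ s in Ioc (0:ℝ) 1, (((s ^ μ)⁻¹ : ℝ) : ℂ) :=
        setIntegral_congr_fun measurableSet_Ioc (fun s _ => by push_cast; ring)
    _ = (((∫ s in Ioc (0:ℝ) 1, ((s ^ μ)⁻¹ : ℝ)) : ℝ) : ℂ) := integral_ofReal
    _ = (((1 - μ)⁻¹ : ℝ) : ℂ) := by rw [key]

lemma rpow_intOn {μ : ℝ} (h1 : μ < 1) :
    IntegrableOn (fun s : ℝ => ((s ^ μ : ℝ) : ℂ)⁻¹) (Ioc (0:ℝ) 1) := by
  have := (intervalIntegrable_rpow' (r := -μ) (by linarith) (a := 0) (b := 1)).1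
  refine IntegrableOn.congr_fun this.ofReal (fun s hs => ?_) measurableSet_Ioc
  simp [Real.rpow_neg hs.1.le]

lemma rpow_int_val_b {μ : ℝ} (h1 : μ < 1) :
    ∫ s in Ioc (-1:ℝ) 0, (((1 + s) ^ μ : ℝ) : ℂ)⁻¹ = ((1 - μ)⁻¹ : ℝ) := by
  have key : ∫ s in Ioc (-1:ℝ) 0, (((1 + s) ^ μ)⁻¹ : ℝ) = (1 - μ)⁻¹ := by
    have h2 : ∫ s in Ioc (-1:ℝ) 0, (((1 + s) ^ μ)⁻¹ : ℝ)
        = ∫ s in (-1:ℝ)..0, ((1 + s) ^ (-μ) : ℝ) := by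
      rw [intervalIntegral.integral_of_le (by norm_num : (-1:ℝ) ≤ 0)]
      refine setIntegral_congr_fun measurableSet_Ioc (fun s hs => ?_)
      rw [Real.rpow_neg (by linarith [hs.1])]
    rw [h2, intervalIntegral.integral_comp_add_left (fun x : ℝ => x ^ (-μ)) 1]
    norm_num
    rw [integral_rpow (Or.inl (by linarith))]
    rw [Real.one_rpow, Real.zero_rpow (by linarith)]
    ring
  calc ∫ s in Ioc (-1:ℝ) 0, (((1 + s) ^ μ : ℝ) : ℂ)⁻¹
      = ∫ s in Ioc (-1:ℝ) 0, ((((1 + s) ^ μ)⁻¹ : ℝ) : ℂ) :=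
        setIntegral_congr_fun measurableSet_Ioc (fun s _ => by push_cast; ring)
    _ = (((∫ s in Ioc (-1:ℝ) 0, (((1 + s) ^ μ)⁻¹ : ℝ)) : ℝ) : ℂ) := integral_ofReal
    _ = (((1 - μ)⁻¹ : ℝ) : ℂ) := by rw [key]

lemma rpow_intOn_b {μ : ℝ} (h1 : μ < 1) :
    IntegrableOn (fun s : ℝ => (((1 + s) ^ μ : ℝ) : ℂ)⁻¹) (Ioc (-1:ℝ) 0) := by
  have h0 := (intervalIntegrable_rpow' (r := -μ) (by linarith) (a := 0) (b := 1))
  have h2 := (h0.comp_add_left 1)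
  norm_num at h2
  have h3 : IntegrableOn (fun s : ℝ => (1 + s) ^ (-μ)) (Ioc (-1:ℝ) 0) := h2.1
  refine IntegrableOn.congr_fun h3.ofReal (fun s hs => ?_) measurableSet_Ioc
  simp [Real.rpow_neg (by linarith [hs.1] : (0:ℝ) ≤ 1 + s)]

end Helpers

set_option maxHeartbeats 2000000

/-- With `a(x) = x^{μ_a}`, `b(x) = (1+x)^{μ_b}`, `0 ≤ μ_a < 1`,
`0 ≤ μ_b < 1`: if `u ∈ V²_a(0,1)` and `w ∈ V²_b(-1,0)` satisfy `(a u')' = f` a.e. on `(0,1)`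
with `f ∈ L²(0,1)`, `(b w')' = g` a.e. on `(-1,0)` with `g ∈ L²(-1,0)`, `w(-1) = 0`,
`u(0) = w(0)`, `lim_{x→0⁺}(a u')(x) = (b w')(0)` and `γ u(1) + u'(1) = c`, then
`(b w')(0) = (1 + γ/(1-μ_a) + γ/(1-μ_b))⁻¹ · (c - ∫₀¹ f(r) dr
  - γ ∫₀¹ a(s)⁻¹ (∫₀^s f(r) dr) ds + γ ∫_{-1}^0 b(s)⁻¹ (∫_s^0 g(r) dr) ds)`. -/
theorem transmission_value (γ μa μb : ℝ) (hγ : 0 < γ)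
    (hμa0 : 0 ≤ μa) (hμa1 : μa < 1) (hμb0 : 0 ≤ μb) (hμb1 : μb < 1)
    (f g : ℝ → ℂ) (c : ℂ)
    (hf : MemLp f 2 (volume.restrict (Ioo (0 : ℝ) 1)))
    (hg : MemLp g 2 (volume.restrict (Ioo (-1 : ℝ) 0)))
    (u u' gu w w' gw : ℝ → ℂ)
    (hu : MemV2C 0 1 (fun x => x ^ μa) u u' gu)
    (hw : MemV2C (-1) 0 (fun x => (1 + x) ^ μb) w w' gw)
    (hgu : gu =ᵐ[volume.restrict (Ioo (0 : ℝ) 1)] f)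
    (hgw : gw =ᵐ[volume.restrict (Ioo (-1 : ℝ) 0)] g)
    (hwm1 : Tendsto w (𝓝[>] (-1 : ℝ)) (𝓝 0))
    (huw : Tendsto u (𝓝[>] (0 : ℝ)) (𝓝 (w 0)))
    (htrans : Tendsto (fun x : ℝ => (x ^ μa : ℝ) • u' x) (𝓝[>] (0 : ℝ))
      (𝓝 ((((1 : ℝ) + 0) ^ μb : ℝ) • w' 0)))
    (hbc : (γ : ℂ) * u 1 + u' 1 = c) :
    (((1 : ℝ) + 0) ^ μb : ℝ) • w' 0 =
      (((1 + γ / (1 - μa) + γ / (1 - μb) : ℝ)) : ℂ)⁻¹ *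
        (c - (∫ r in Ioo (0 : ℝ) 1, f r)
          - (γ : ℂ) * (∫ s in Ioo (0 : ℝ) 1, ((s ^ μa : ℝ) : ℂ)⁻¹ * ∫ r in Ioo (0 : ℝ) s, f r)
          + (γ : ℂ) * (∫ s in Ioo (-1 : ℝ) 0, (((1 + s) ^ μb : ℝ) : ℂ)⁻¹ *
              ∫ r in Ioo s (0 : ℝ), g r)) := by
  set T : ℂ := ((((1 : ℝ) + 0) ^ μb : ℝ) • w' 0) with hTdef
  haveI hfin1 : IsFiniteMeasure (volume.restrict (Ioo (0:ℝ) 1)) :=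
    ⟨by rw [Measure.restrict_apply_univ, Real.volume_Ioo]; exact ENNReal.ofReal_lt_top⟩
  haveI hfin2 : IsFiniteMeasure (volume.restrict (Ioo (-1:ℝ) 0)) :=
    ⟨by rw [Measure.restrict_apply_univ, Real.volume_Ioo]; exact ENNReal.ofReal_lt_top⟩
  -- basic integrability
  have hgui : IntegrableOn gu (Ioo (0:ℝ) 1) := hu.2.2.1.integrable one_le_two
  have hguic : IntegrableOn gu (Ioc (0:ℝ) 1) := hgui.congr_set_ae Ioo_ae_eq_Ioc.symm
  have hgwi : IntegrableOn gw (Ioo (-1:ℝ) 0) := hw.2.2.1.integrable one_le_two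
  have hgwic : IntegrableOn gw (Ioc (-1:ℝ) 0) := hgwi.congr_set_ae Ioo_ae_eq_Ioc.symm
  -- indicator extensions and primitives
  set gu₀ : ℝ → ℂ := (Ioc (0:ℝ) 1).indicator gu with hgu₀def
  set gw₀ : ℝ → ℂ := (Ioc (-1:ℝ) 0).indicator gw with hgw₀def
  have hgu₀ : Integrable gu₀ := (integrable_indicator_iff measurableSet_Ioc).2 hguic
  have hgw₀ : Integrable gw₀ := (integrable_indicator_iff measurableSet_Ioc).2 hgwic
  set E : ℝ → ℂ := fun s => ∫ t in (0:ℝ)..s, gu₀ t with hEdef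
  set Ew : ℝ → ℂ := fun s => ∫ t in s..(0:ℝ), gw₀ t with hEwdef
  have hEcont : Continuous E := hgu₀.continuous_primitive 0
  have hE0 : E 0 = 0 := intervalIntegral.integral_same
  have hEw0 : Ew 0 = 0 := intervalIntegral.integral_same
  -- interval integrals of gu in terms of E
  have hEgu : ∀ x y : ℝ, 0 ≤ x → x ≤ y → y ≤ 1 → (∫ t in x..y, gu t) = E y - E x := by
    intro x y hx hxy hy
    rw [← ind_int_eq gu hx hxy hy]
    rw [hEdef]
    rw [intervalIntegral.integral_interval_sub_left hgu₀.intervalIntegrable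
      hgu₀.intervalIntegrable]
  have hEwgw : ∀ x : ℝ, -1 ≤ x → x ≤ 0 → (∫ t in x..(0:ℝ), gw t) = Ew x := by
    intro x hx hx0
    rw [← ind_int_eq gw hx hx0 le_rfl]
  -- pointwise identity for a·u' on (0,1]
  have hau' : ∀ y : ℝ, 0 < y → y ≤ 1 → (y ^ μa : ℝ) • u' y = T + E y := by
    intro y hy0 hy1
    have hlim2 : Tendsto (fun x : ℝ => (y ^ μa : ℝ) • u' y - (E y - E x)) (𝓝[>] (0:ℝ))
        (𝓝 ((y ^ μa : ℝ) • u' y - (E y - E 0))) := by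
      exact ((continuous_const.sub (continuous_const.sub hEcont)).tendsto 0).mono_left
        nhdsWithin_le_nhds
    have heq : (fun x : ℝ => (x ^ μa : ℝ) • u' x) =ᶠ[𝓝[>] (0:ℝ)]
        (fun x : ℝ => (y ^ μa : ℝ) • u' y - (E y - E x)) := by
      filter_upwards [Ioo_mem_nhdsGT_of_mem (⟨le_refl 0, hy0⟩ : (0:ℝ) ∈ Ico 0 y)] with x hx
      have h1 := (hu.2.2.2 x y hx.1 hx.2.le hy1).2
      have h2 : (y ^ μa : ℝ) • u' y - (x ^ μa : ℝ) • u' x = E y - E x := by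
        rw [← hEgu x y hx.1.le hx.2.le hy1]; exact h1
      rw [← h2, sub_sub_cancel]
    have := tendsto_nhds_unique (htrans.congr' heq) hlim2
    rw [hE0, sub_zero] at this
    rw [this]; ring
  -- pointwise identity for b·w' on (-1,0]
  have hbw' : ∀ x : ℝ, -1 < x → x ≤ 0 → ((1 + x) ^ μb : ℝ) • w' x = T - Ew x := by
    intro x hx hx0
    have h1 := (hw.2.2.2 x 0 hx hx0 le_rfl).2
    rw [hEwgw x hx.le hx0] at h1
    have : (((1:ℝ) + 0) ^ μb : ℝ) • w' 0 - ((1 + x) ^ μb : ℝ) • w' x = Ew x := h1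
    rw [← hTdef] at this
    rw [← this]; ring
  -- u' formula
  set φ : ℝ → ℂ := fun s => ((s ^ μa : ℝ) : ℂ)⁻¹ * (T + E s) with hφdef
  have hu'eq : ∀ y : ℝ, 0 < y → y ≤ 1 → u' y = φ y := by
    intro y hy0 hy1
    have hne : ((y ^ μa : ℝ) : ℂ) ≠ 0 := by
      exact_mod_cast (Real.rpow_pos_of_pos hy0 μa).ne'
    have h := hau' y hy0 hy1
    rw [Complex.real_smul] at h
    show u' y = ((y ^ μa : ℝ) : ℂ)⁻¹ * (T + E y)
    rw [← h, inv_mul_cancel_left₀ hne]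
  -- w' formula
  set ψ : ℝ → ℂ := fun s => (((1 + s) ^ μb : ℝ) : ℂ)⁻¹ * (T - Ew s) with hψdef
  have hw'eq : ∀ y : ℝ, -1 < y → y ≤ 0 → w' y = ψ y := by
    intro y hy0 hy1
    have hpos : (0:ℝ) < (1 + y) ^ μb := Real.rpow_pos_of_pos (by linarith) μb
    have hne : (((1 + y) ^ μb : ℝ) : ℂ) ≠ 0 := by exact_mod_cast hpos.ne'
    have h := hbw' y hy0 hy1
    rw [Complex.real_smul] at h
    show w' y = (((1 + y) ^ μb : ℝ) : ℂ)⁻¹ * (T - Ew y)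
    rw [← h, inv_mul_cancel_left₀ hne]
  -- continuity of Ew
  have hEwcont : Continuous Ew := by
    have h1 := (hgw₀.continuous_primitive 0).neg
    have : Ew = fun s => -∫ t in (0:ℝ)..s, gw₀ t := by
      funext s; rw [hEwdef]; exact intervalIntegral.integral_symm 0 s
    rw [this]; exact h1
  -- bounds
  have hEbd : ∀ s : ℝ, ‖E s‖ ≤ ∫ t, ‖gu₀ t‖ := by
    intro s
    refine (intervalIntegral.norm_integral_le_integral_norm_uIoc).trans ?_
    exact setIntegral_le_integral hgu₀.norm (Eventually.of_forall fun t => norm_nonneg _)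
  have hEwbd : ∀ s : ℝ, ‖Ew s‖ ≤ ∫ t, ‖gw₀ t‖ := by
    intro s
    refine (intervalIntegral.norm_integral_le_integral_norm_uIoc).trans ?_
    exact setIntegral_le_integral hgw₀.norm (Eventually.of_forall fun t => norm_nonneg _)
  -- integrability of φ pieces
  have hra := rpow_intOn (μ := μa) hμa1
  have hrb := rpow_intOn_b (μ := μb) hμb1
  have hφ1 : IntegrableOn (fun s : ℝ => ((s ^ μa : ℝ) : ℂ)⁻¹ * T) (Ioc (0:ℝ) 1) :=
    hra.mul_const T
  have hφ2 : IntegrableOn (fun s : ℝ => ((s ^ μa : ℝ) : ℂ)⁻¹ * E s) (Ioc (0:ℝ) 1) := by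
    refine Integrable.mono' (hra.norm.mul_const (∫ t, ‖gu₀ t‖))
      (hra.aestronglyMeasurable.mul (hEcont.aestronglyMeasurable.restrict)) ?_
    refine Eventually.of_forall fun s => ?_
    rw [norm_mul]
    exact mul_le_mul_of_nonneg_left (hEbd s) (norm_nonneg _)
  have hψ1 : IntegrableOn (fun s : ℝ => (((1 + s) ^ μb : ℝ) : ℂ)⁻¹ * T) (Ioc (-1:ℝ) 0) :=
    hrb.mul_const T
  have hψ2 : IntegrableOn (fun s : ℝ => (((1 + s) ^ μb : ℝ) : ℂ)⁻¹ * Ew s) (Ioc (-1:ℝ) 0) := by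
    refine Integrable.mono' (hrb.norm.mul_const (∫ t, ‖gw₀ t‖))
      (hrb.aestronglyMeasurable.mul (hEwcont.aestronglyMeasurable.restrict)) ?_
    refine Eventually.of_forall fun s => ?_
    rw [norm_mul]
    exact mul_le_mul_of_nonneg_left (hEwbd s) (norm_nonneg _)
  have hφint : IntegrableOn φ (Ioc (0:ℝ) 1) := by
    have h : φ = fun s => ((s ^ μa : ℝ) : ℂ)⁻¹ * T + ((s ^ μa : ℝ) : ℂ)⁻¹ * E s := by
      funext s; rw [hφdef]; ring
    rw [h]; exact hφ1.add hφ2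
  have hψint : IntegrableOn ψ (Ioc (-1:ℝ) 0) := by
    have h : ψ = fun s => (((1 + s) ^ μb : ℝ) : ℂ)⁻¹ * T
        - (((1 + s) ^ μb : ℝ) : ℂ)⁻¹ * Ew s := by
      funext s; rw [hψdef]; ring
    rw [h]; exact hψ1.sub hψ2
  -- values of the integrals of φ and ψ
  have hφval : ∫ s in Ioc (0:ℝ) 1, φ s
      = (((1 - μa)⁻¹ : ℝ) : ℂ) * T + ∫ s in Ioc (0:ℝ) 1, ((s ^ μa : ℝ) : ℂ)⁻¹ * E s := by
    calc ∫ s in Ioc (0:ℝ) 1, φ s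
        = ∫ s in Ioc (0:ℝ) 1,
            (((s ^ μa : ℝ) : ℂ)⁻¹ * T + ((s ^ μa : ℝ) : ℂ)⁻¹ * E s) :=
          setIntegral_congr_fun measurableSet_Ioc (fun s _ => by rw [hφdef]; ring)
      _ = (∫ s in Ioc (0:ℝ) 1, ((s ^ μa : ℝ) : ℂ)⁻¹ * T)
          + ∫ s in Ioc (0:ℝ) 1, ((s ^ μa : ℝ) : ℂ)⁻¹ * E s := integral_add hφ1 hφ2
      _ = _ := by rw [MeasureTheory.integral_mul_const, rpow_int_val hμa0 hμa1]
  have hψval : ∫ s in Ioc (-1:ℝ) 0, ψ s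
      = (((1 - μb)⁻¹ : ℝ) : ℂ) * T - ∫ s in Ioc (-1:ℝ) 0, (((1 + s) ^ μb : ℝ) : ℂ)⁻¹ * Ew s := by
    calc ∫ s in Ioc (-1:ℝ) 0, ψ s
        = ∫ s in Ioc (-1:ℝ) 0,
            ((((1 + s) ^ μb : ℝ) : ℂ)⁻¹ * T - (((1 + s) ^ μb : ℝ) : ℂ)⁻¹ * Ew s) :=
          setIntegral_congr_fun measurableSet_Ioc (fun s _ => by rw [hψdef]; ring)
      _ = (∫ s in Ioc (-1:ℝ) 0, (((1 + s) ^ μb : ℝ) : ℂ)⁻¹ * T)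
          - ∫ s in Ioc (-1:ℝ) 0, (((1 + s) ^ μb : ℝ) : ℂ)⁻¹ * Ew s := integral_sub hψ1 hψ2
      _ = _ := by rw [MeasureTheory.integral_mul_const, rpow_int_val_b hμb1]
  -- u(1) equation
  have hu1 : u 1 - w 0 = ∫ s in Ioc (0:ℝ) 1, φ s := by
    set φ₀ : ℝ → ℂ := (Ioc (0:ℝ) 1).indicator φ with hφ₀def
    have hφ₀ : Integrable φ₀ := (integrable_indicator_iff measurableSet_Ioc).2 hφint
    have hlim1 : Tendsto (fun x => u 1 - u x) (𝓝[>] (0:ℝ)) (𝓝 (u 1 - w 0)) :=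
      tendsto_const_nhds.sub huw
    have hlim2 := tendsto_prim φ₀ hφ₀ 1 0
    have heq : (fun x => u 1 - u x) =ᶠ[𝓝[>] (0:ℝ)] fun x => ∫ t in x..1, φ₀ t := by
      filter_upwards [Ioo_mem_nhdsGT_of_mem (⟨le_refl 0, one_pos⟩ : (0:ℝ) ∈ Ico 0 1)] with x hx
      have h1 := (hu.1.2.1 x 1 hx.1 hx.2.le le_rfl).2
      have h2 : ∫ t in x..1, u' t = ∫ t in x..1, φ t := by
        refine intervalIntegral.integral_congr fun s hs => ?_
        rw [uIcc_of_le hx.2.le] at hs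
        exact hu'eq s (lt_of_lt_of_le hx.1 hs.1) hs.2
      rw [h1, h2, ← ind_int_eq φ hx.1.le hx.2.le le_rfl]
    have h3 := tendsto_nhds_unique (hlim1.congr' heq) hlim2
    rw [h3, hφ₀def, ind_int_eq φ le_rfl zero_le_one le_rfl,
      intervalIntegral.integral_of_le zero_le_one]
  -- w(0) equation
  have hw0 : w 0 = ∫ s in Ioc (-1:ℝ) 0, ψ s := by
    set ψ₀ : ℝ → ℂ := (Ioc (-1:ℝ) 0).indicator ψ with hψ₀def
    have hψ₀ : Integrable ψ₀ := (integrable_indicator_iff measurableSet_Ioc).2 hψint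
    have hlim1 : Tendsto (fun x => w 0 - w x) (𝓝[>] (-1:ℝ)) (𝓝 (w 0)) := by
      have := tendsto_const_nhds.sub hwm1 (f := fun x : ℝ => w 0)
      rwa [sub_zero] at this
    have hlim2 := tendsto_prim ψ₀ hψ₀ 0 (-1)
    have heq : (fun x => w 0 - w x) =ᶠ[𝓝[>] (-1:ℝ)] fun x => ∫ t in x..0, ψ₀ t := by
      filter_upwards [Ioo_mem_nhdsGT_of_mem
        (⟨le_refl (-1:ℝ), by norm_num⟩ : (-1:ℝ) ∈ Ico (-1:ℝ) 0)] with x hx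
      have h1 := (hw.1.2.1 x 0 hx.1 hx.2.le le_rfl).2
      have h2 : ∫ t in x..0, w' t = ∫ t in x..0, ψ t := by
        refine intervalIntegral.integral_congr fun s hs => ?_
        rw [uIcc_of_le hx.2.le] at hs
        exact hw'eq s (lt_of_lt_of_le hx.1 hs.1) hs.2
      rw [h1, h2, ← ind_int_eq ψ hx.1.le hx.2.le le_rfl]
    have h3 := tendsto_nhds_unique (hlim1.congr' heq) hlim2
    rw [h3, hψ₀def, ind_int_eq ψ le_rfl (by norm_num) le_rfl,
      intervalIntegral.integral_of_le (by norm_num : (-1:ℝ) ≤ 0)]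
  -- u'(1)
  have hu'1 : u' 1 = T + E 1 := by
    have h := hau' 1 one_pos le_rfl
    rwa [Real.one_rpow, one_smul] at h
  -- E, Ew in terms of f and g
  have hEf : ∀ s : ℝ, 0 ≤ s → s ≤ 1 → E s = ∫ r in Ioo (0:ℝ) s, f r := by
    intro s h0 h1'
    have : E s = ∫ t in (0:ℝ)..s, gu t := ind_int_eq gu le_rfl h0 h1'
    rw [this, intervalIntegral.integral_of_le h0, integral_Ioc_eq_integral_Ioo]
    exact integral_congr_ae (ae_restrict_of_ae_restrict_of_subset
      (Ioo_subset_Ioo le_rfl h1') hgu)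
  have hEwg : ∀ s : ℝ, -1 ≤ s → s ≤ 0 → Ew s = ∫ r in Ioo s (0:ℝ), g r := by
    intro s h0 h1'
    have : Ew s = ∫ t in s..(0:ℝ), gw t := ind_int_eq gw h0 h1' le_rfl
    rw [this, intervalIntegral.integral_of_le h1', integral_Ioc_eq_integral_Ioo]
    exact integral_congr_ae (ae_restrict_of_ae_restrict_of_subset
      (Ioo_subset_Ioo h0 le_rfl) hgw)
  -- identify the statement integrals
  have hIf : ∫ s in Ioc (0:ℝ) 1, ((s ^ μa : ℝ) : ℂ)⁻¹ * E s
      = ∫ s in Ioo (0:ℝ) 1, ((s ^ μa : ℝ) : ℂ)⁻¹ * ∫ r in Ioo (0:ℝ) s, f r := by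
    rw [integral_Ioc_eq_integral_Ioo]
    exact setIntegral_congr_fun measurableSet_Ioo fun s hs => by rw [hEf s hs.1.le hs.2.le]
  have hIg : ∫ s in Ioc (-1:ℝ) 0, (((1 + s) ^ μb : ℝ) : ℂ)⁻¹ * Ew s
      = ∫ s in Ioo (-1:ℝ) 0, (((1 + s) ^ μb : ℝ) : ℂ)⁻¹ * ∫ r in Ioo s (0:ℝ), g r := by
    rw [integral_Ioc_eq_integral_Ioo]
    exact setIntegral_congr_fun measurableSet_Ioo fun s hs => by rw [hEwg s hs.1.le hs.2.le]
  -- final algebra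
  set F1 : ℂ := ∫ r in Ioo (0:ℝ) 1, f r with hF1def
  set If : ℂ := ∫ s in Ioo (0:ℝ) 1, ((s ^ μa : ℝ) : ℂ)⁻¹ * ∫ r in Ioo (0:ℝ) s, f r with hIfdef
  set Ig : ℂ := ∫ s in Ioo (-1:ℝ) 0, (((1 + s) ^ μb : ℝ) : ℂ)⁻¹ * ∫ r in Ioo s (0:ℝ), g r
    with hIgdef
  have hE1 : E 1 = F1 := hEf 1 zero_le_one le_rfl
  have e1 : u 1 = w 0 + ((((1 - μa)⁻¹ : ℝ) : ℂ) * T + If) := by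
    have := hu1
    rw [hφval, hIf] at this
    rw [← this]; ring
  have e2 : w 0 = (((1 - μb)⁻¹ : ℝ) : ℂ) * T - Ig := by
    rw [hw0, hψval, hIg]
  have e3 : u' 1 = T + F1 := by rw [hu'1, hE1]
  have h1a : (1 - (μa:ℂ)) ≠ 0 := by
    have h : (1 - μa : ℝ) ≠ 0 := by linarith
    exact_mod_cast h
  have h1b : (1 - (μb:ℂ)) ≠ 0 := by
    have h : (1 - μb : ℝ) ≠ 0 := by linarith
    exact_mod_cast h
  have hDpos : (0:ℝ) < 1 + γ / (1 - μa) + γ / (1 - μb) := by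
    have ha := div_pos hγ (by linarith : (0:ℝ) < 1 - μa)
    have hb := div_pos hγ (by linarith : (0:ℝ) < 1 - μb)
    linarith
  have hD : ((1 + γ / (1 - μa) + γ / (1 - μb) : ℝ) : ℂ) ≠ 0 := by
    exact_mod_cast hDpos.ne'
  rw [eq_inv_mul_iff_mul_eq₀ hD]
  have key : (γ:ℂ) * (w 0 + ((((1 - μa)⁻¹ : ℝ) : ℂ) * T + If)) + (T + F1) = c := by
    rw [← e1, ← e3]; exact hbc
  rw [e2] at key
  push_cast at key ⊢
  field_simp at key ⊢
  linear_combination key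
end

section
/- Let 0 ≤ μ < 2, a(x) = x^μ on (0,1], and let u ∈ V²_a(0,1) be complex-valued. Then for every ξ ∈ (0, 1/2] there exists ζ ∈ [ξ, 2ξ] such that |(a u')(ζ)| ≤ ((2^{μ+1} − 1)/(μ + 1))^{1/2} · ξ^{(μ−1)/2} · (∫₀¹ x^μ |u'(x)|² dx)^{1/2}. -/
open MeasureTheory Set Filter Topology

lemma finIoo (a b : ℝ) : IsFiniteMeasure (volume.restrict (Ioo a b)) := by
  constructor
  rw [Measure.restrict_apply_univ]
  exact measure_Ioo_lt_top

lemma memL2_of_contOn {f : ℝ → ℝ} {a b : ℝ} (hf : ContinuousOn f (Icc a b)) :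
    MemLp f 2 (volume.restrict (Ioo a b)) := by
  haveI := finIoo a b
  obtain ⟨C, hC⟩ := isCompact_Icc.exists_bound_of_continuousOn hf
  refine MemLp.of_bound ((hf.aestronglyMeasurable measurableSet_Icc).mono_measure
    (Measure.restrict_mono Ioo_subset_Icc_self le_rfl)) C ?_
  exact (ae_restrict_iff' measurableSet_Ioo).2
    (ae_of_all _ fun x hx => hC x (Ioo_subset_Icc_self hx))

/-- Let `0 ≤ μ < 2`, `a(x) = x^μ`, and let `u ∈ V²_a(0,1)` be
complex-valued. For every `ξ ∈ (0, 1/2]` there exists `ζ ∈ [ξ, 2ξ]` with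
`|(a u')(ζ)| ≤ ((2^{μ+1} - 1)/(μ+1))^{1/2} · ξ^{(μ-1)/2} · (∫₀¹ x^μ |u'(x)|² dx)^{1/2}`. -/
theorem min_point_estimate (μ : ℝ) (hμ0 : 0 ≤ μ) (hμ2 : μ < 2)
    (u u' g' : ℝ → ℂ) (hu : MemV2C 0 1 (fun x => x ^ μ) u u' g') :
    ∀ ξ : ℝ, 0 < ξ → ξ ≤ 1 / 2 → ∃ ζ ∈ Icc ξ (2 * ξ),
      ‖((ζ ^ μ : ℝ) : ℂ) * u' ζ‖ ≤
        Real.sqrt (((2 : ℝ) ^ (μ + 1) - 1) / (μ + 1)) * ξ ^ ((μ - 1) / 2) *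
          Real.sqrt (∫ x in Ioo (0 : ℝ) 1, x ^ μ * ‖u' x‖ ^ 2) := by
  obtain ⟨⟨hu2, hFTCu, hsqrt⟩, hau, hg'2, hFTC⟩ := hu
  intro ξ hξ0 hξ12
  have h2ξ1 : 2 * ξ ≤ 1 := by linarith
  have hξle : ξ ≤ 2 * ξ := by linarith
  set g : ℝ → ℂ := fun x => (x ^ μ : ℝ) • u' x with hgdef
  -- continuity of g on [ξ, 2ξ]
  have hg'int : IntervalIntegrable g' volume ξ (2 * ξ) := (hFTC ξ (2 * ξ) hξ0 hξle h2ξ1).1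
  have hgeq : ∀ x ∈ Icc ξ (2 * ξ), g x = g ξ + ∫ t in ξ..x, g' t := by
    intro x hx
    have h := (hFTC ξ x hξ0 hx.1 (hx.2.trans h2ξ1)).2
    simp only [hgdef]
    rw [← h]; ring
  have hgcont : ContinuousOn g (Icc ξ (2 * ξ)) := by
    have hprim : ContinuousOn (fun x => g ξ + ∫ t in ξ..x, g' t) (Icc ξ (2 * ξ)) := by
      have := intervalIntegral.continuousOn_primitive_interval' hg'int left_mem_uIcc
      rw [uIcc_of_le hξle] at this
      exact continuousOn_const.add this
    exact hprim.congr hgeq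
  -- minimum point
  obtain ⟨ζ, hζmem, hζmin⟩ := isCompact_Icc.exists_isMinOn (nonempty_Icc.2 hξle) hgcont.norm
  refine ⟨ζ, hζmem, ?_⟩
  rw [← Complex.real_smul]
  show ‖g ζ‖ ≤ _
  haveI := finIoo ξ (2 * ξ)
  set B := ∫ x in Ioo (0 : ℝ) 1, x ^ μ * ‖u' x‖ ^ 2 with hBdef
  set φ : ℝ → ℝ := fun x => x ^ (μ / 2) with hφdef
  set ψ : ℝ → ℝ := fun x => x ^ (-(μ / 2)) * ‖g x‖ with hψdef
  -- Step 1 : ‖g ζ‖ * ξ ≤ ∫ ‖g‖ over Ioo ξ (2ξ)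
  have hgnormint : IntegrableOn (fun x => ‖g x‖) (Ioo ξ (2 * ξ)) volume :=
    hgcont.norm.integrableOn_Icc.mono_set Ioo_subset_Icc_self
  have step1 : ‖g ζ‖ * ξ ≤ ∫ x in Ioo ξ (2 * ξ), ‖g x‖ := by
    have hconst : ∫ _x in Ioo ξ (2 * ξ), ‖g ζ‖ = ‖g ζ‖ * ξ := by
      rw [setIntegral_const, measureReal_def, Real.volume_Ioo, smul_eq_mul,
        ENNReal.toReal_ofReal (by linarith : (0:ℝ) ≤ 2 * ξ - ξ)]
      ring
    rw [← hconst]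
    refine setIntegral_mono_on (integrableOn_const measure_Ioo_lt_top.ne)
      hgnormint measurableSet_Ioo (fun x hx => hζmin (Ioo_subset_Icc_self hx))
  -- Step 2 : rewrite ‖g‖ as φ * ψ
  have step2 : ∫ x in Ioo ξ (2 * ξ), ‖g x‖ = ∫ x in Ioo ξ (2 * ξ), φ x * ψ x := by
    refine (setIntegral_congr_fun measurableSet_Ioo (fun x hx => ?_)).symm
    have hx0 : (0:ℝ) < x := lt_trans hξ0 hx.1
    simp only [hφdef, hψdef]
    rw [← mul_assoc, ← Real.rpow_add hx0]
    norm_num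
  -- Step 3 : Cauchy–Schwarz
  have hconj : Real.HolderConjugate 2 2 := Real.HolderConjugate.two_two
  have hE2 : ENNReal.ofReal (2:ℝ) = 2 := by norm_num
  have hφcont : ContinuousOn φ (Icc ξ (2 * ξ)) := by
    refine continuousOn_id.rpow_const (fun x hx => Or.inl ?_)
    exact ne_of_gt (lt_of_lt_of_le hξ0 hx.1)
  have hψcont : ContinuousOn ψ (Icc ξ (2 * ξ)) := by
    refine (continuousOn_id.rpow_const (fun x hx => Or.inl ?_)).mul hgcont.norm
    exact ne_of_gt (lt_of_lt_of_le hξ0 hx.1)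
  have hφmem : MemLp φ (ENNReal.ofReal (2:ℝ)) (volume.restrict (Ioo ξ (2 * ξ))) := by
    rw [hE2]; exact memL2_of_contOn hφcont
  have hψmem : MemLp ψ (ENNReal.ofReal (2:ℝ)) (volume.restrict (Ioo ξ (2 * ξ))) := by
    rw [hE2]; exact memL2_of_contOn hψcont
  have hφnn : 0 ≤ᵐ[volume.restrict (Ioo ξ (2 * ξ))] φ := by
    refine (ae_restrict_iff' measurableSet_Ioo).2 (ae_of_all _ fun x hx => ?_)
    exact Real.rpow_nonneg (le_of_lt (lt_trans hξ0 hx.1)) _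
  have hψnn : 0 ≤ᵐ[volume.restrict (Ioo ξ (2 * ξ))] ψ := by
    refine (ae_restrict_iff' measurableSet_Ioo).2 (ae_of_all _ fun x hx => ?_)
    exact mul_nonneg (Real.rpow_nonneg (le_of_lt (lt_trans hξ0 hx.1)) _) (norm_nonneg _)
  have step3 : ∫ x in Ioo ξ (2 * ξ), φ x * ψ x ≤
      (∫ x in Ioo ξ (2 * ξ), φ x ^ (2:ℝ)) ^ ((1:ℝ)/2) *
      (∫ x in Ioo ξ (2 * ξ), ψ x ^ (2:ℝ)) ^ ((1:ℝ)/2) :=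
    integral_mul_le_Lp_mul_Lq_of_nonneg hconj hφnn hψnn hφmem hψmem
  -- Step 4 : the integral of φ²
  have step4 : ∫ x in Ioo ξ (2 * ξ), φ x ^ (2:ℝ) =
      ξ ^ (μ + 1) * (((2:ℝ) ^ (μ + 1) - 1) / (μ + 1)) := by
    have hcg : ∀ x ∈ Ioo ξ (2 * ξ), φ x ^ (2:ℝ) = x ^ μ := by
      intro x hx
      have hx0 : (0:ℝ) < x := lt_trans hξ0 hx.1
      simp only [hφdef]
      rw [← Real.rpow_mul hx0.le]
      norm_num
    have hrp : ∫ x in ξ..(2 * ξ), x ^ μ = ((2 * ξ) ^ (μ + 1) - ξ ^ (μ + 1)) / (μ + 1) :=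
      integral_rpow (Or.inl (by linarith))
    rw [setIntegral_congr_fun measurableSet_Ioo hcg, ← integral_Ioc_eq_integral_Ioo,
      ← intervalIntegral.integral_of_le hξle, hrp,
      Real.mul_rpow (by norm_num : (0:ℝ) ≤ 2) hξ0.le]
    ring
  -- Step 5 : the integral of ψ² is bounded by B
  have hBint : IntegrableOn (fun x => x ^ μ * ‖u' x‖ ^ 2) (Ioo (0:ℝ) 1) volume := by
    have h2 : Integrable (fun x => ‖Real.sqrt (x ^ μ) • u' x‖ ^ ((2 : ENNReal).toReal))
        (volume.restrict (Ioo (0:ℝ) 1)) :=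
      hsqrt.integrable_norm_rpow (by norm_num) (by norm_num)
    refine h2.congr ?_
    refine (ae_restrict_iff' measurableSet_Ioo).2 (ae_of_all _ fun x hx => ?_)
    have hx0 : (0:ℝ) < x := hx.1
    show ‖Real.sqrt (x ^ μ) • u' x‖ ^ ((2 : ENNReal).toReal) = x ^ μ * ‖u' x‖ ^ 2
    rw [norm_smul, Real.norm_of_nonneg (Real.sqrt_nonneg _)]
    rw [show ((2 : ENNReal).toReal) = (2:ℝ) by norm_num,
      Real.mul_rpow (Real.sqrt_nonneg _) (norm_nonneg _), Real.rpow_two, Real.rpow_two,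
      Real.sq_sqrt (Real.rpow_nonneg hx0.le μ)]
  have hBnnae : 0 ≤ᵐ[volume.restrict (Ioo (0:ℝ) 1)] fun x => x ^ μ * ‖u' x‖ ^ 2 := by
    refine (ae_restrict_iff' measurableSet_Ioo).2 (ae_of_all _ fun x hx => ?_)
    exact mul_nonneg (Real.rpow_nonneg hx.1.le _) (sq_nonneg _)
  have step5 : ∫ x in Ioo ξ (2 * ξ), ψ x ^ (2:ℝ) ≤ B := by
    have hcg : ∀ x ∈ Ioo ξ (2 * ξ), ψ x ^ (2:ℝ) = x ^ μ * ‖u' x‖ ^ 2 := by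
      intro x hx
      have hx0 : (0:ℝ) < x := lt_trans hξ0 hx.1
      have h1 : ψ x = x ^ (μ / 2) * ‖u' x‖ := by
        have hg1 : ‖g x‖ = x ^ μ * ‖u' x‖ := by
          simp only [hgdef]
          rw [norm_smul, Real.norm_of_nonneg (Real.rpow_nonneg hx0.le μ)]
        simp only [hψdef]
        rw [hg1, ← mul_assoc, ← Real.rpow_add hx0,
          show -(μ / 2) + μ = μ / 2 by ring]
      rw [h1, Real.mul_rpow (Real.rpow_nonneg hx0.le _) (norm_nonneg _),
        ← Real.rpow_mul hx0.le, Real.rpow_two]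
      norm_num
    rw [setIntegral_congr_fun measurableSet_Ioo hcg, hBdef]
    exact setIntegral_mono_set hBint hBnnae
      (HasSubset.Subset.eventuallyLE (Ioo_subset_Ioo hξ0.le h2ξ1))
  -- Step 6 : combine
  have hBnn : (0:ℝ) ≤ B := by
    rw [hBdef]
    exact setIntegral_nonneg measurableSet_Ioo
      (fun x hx => mul_nonneg (Real.rpow_nonneg hx.1.le _) (sq_nonneg _))
  have hCnn : (0:ℝ) ≤ ((2:ℝ) ^ (μ + 1) - 1) / (μ + 1) := by
    apply div_nonneg _ (by linarith)
    have h := Real.rpow_le_rpow_of_exponent_le (by norm_num : (1:ℝ) ≤ 2)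
      (by linarith : (0:ℝ) ≤ μ + 1)
    rw [Real.rpow_zero] at h
    linarith
  have key : ‖g ζ‖ * ξ ≤
      (Real.sqrt (((2:ℝ) ^ (μ + 1) - 1) / (μ + 1)) * ξ ^ ((μ - 1) / 2) * Real.sqrt B) * ξ := by
    have h4 : (∫ x in Ioo ξ (2 * ξ), φ x ^ (2:ℝ)) ^ ((1:ℝ)/2) =
        ξ ^ ((μ + 1) / 2) * Real.sqrt (((2:ℝ) ^ (μ + 1) - 1) / (μ + 1)) := by
      rw [step4, ← Real.sqrt_eq_rpow,
        Real.sqrt_mul (Real.rpow_nonneg hξ0.le _), Real.sqrt_eq_rpow (ξ ^ (μ+1)),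
        ← Real.rpow_mul hξ0.le, show (μ + 1) * (1 / 2) = (μ + 1) / 2 by ring]
    have h5 : (∫ x in Ioo ξ (2 * ξ), ψ x ^ (2:ℝ)) ^ ((1:ℝ)/2) ≤ Real.sqrt B := by
      rw [← Real.sqrt_eq_rpow]
      exact Real.sqrt_le_sqrt step5
    have hξpow : ξ ^ ((μ + 1) / 2) = ξ ^ ((μ - 1) / 2) * ξ := by
      rw [show (μ + 1) / 2 = (μ - 1) / 2 + 1 by ring, Real.rpow_add hξ0, Real.rpow_one]
    calc ‖g ζ‖ * ξ ≤ ∫ x in Ioo ξ (2 * ξ), φ x * ψ x := step2 ▸ step1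
      _ ≤ (∫ x in Ioo ξ (2 * ξ), φ x ^ (2:ℝ)) ^ ((1:ℝ)/2) *
          (∫ x in Ioo ξ (2 * ξ), ψ x ^ (2:ℝ)) ^ ((1:ℝ)/2) := step3
      _ ≤ (ξ ^ ((μ + 1) / 2) * Real.sqrt (((2:ℝ) ^ (μ + 1) - 1) / (μ + 1))) * Real.sqrt B := by
          rw [h4]
          exact mul_le_mul_of_nonneg_left h5
            (mul_nonneg (Real.rpow_nonneg hξ0.le _) (Real.sqrt_nonneg _))
      _ = (Real.sqrt (((2:ℝ) ^ (μ + 1) - 1) / (μ + 1)) * ξ ^ ((μ - 1) / 2) * Real.sqrt B) * ξ := by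
          rw [hξpow]; ring
  exact le_of_mul_le_mul_right key hξ0
end
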